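/- (Csiszár-Kullback-Pinsker inequality) For probability measures $\mu, \nu$ on a measurable space, $2\|\mu - \nu\|_{TV}^2 \leq \mathcal H(\mu|\nu)$, where $\|\cdot\|_{TV}$ is the total variation norm. -/

import Mathlib

open MeasureTheory Classical

/-- Relative entropy `H(μ|ν) = ∫ log(dμ/dν) dμ` if `μ ≪ ν` (and the
integral is finite), and `+∞` otherwise. -/
noncomputable def relEnt {Ω : Type*} [MeasurableSpace Ω] (μ ν : Measure Ω) : EReal :=
  if μ ≪ ν ∧ Integrable (llr μ ν) μ then ((∫ x, llr μ ν x ∂μ : ℝ) : EReal) else ⊤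

/-- Total variation distance: `sup_A |μ(A) - ν(A)|` over measurable sets. -/
noncomputable def tvDist {Ω : Type*} [MeasurableSpace Ω] (μ ν : Measure Ω) : ℝ :=
  ⨆ A : {A : Set Ω // MeasurableSet A}, |(μ A).toReal - (ν A).toReal|


/-- `1 - 1/x ≤ log x` for `x > 0`. -/
lemma aux_one_sub_inv_le_log {x : ℝ} (hx : 0 < x) : 1 - 1/x ≤ Real.log x := by
  have h := Real.log_le_sub_one_of_pos (show (0:ℝ) < x⁻¹ by positivity)
  rw [Real.log_inv] at h
  have hx' : 0 < x⁻¹ := by positivity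
  rw [one_div]
  linarith

lemma aux_G_hasDeriv {y : ℝ} (hy : 0 < y) :
    HasDerivAt (fun x => (x+1)*Real.log x - 2*(x-1)) (Real.log y + 1/y - 1) y := by
  have h1 : HasDerivAt (fun x : ℝ => (x+1)*Real.log x) (1 * Real.log y + (y+1) * y⁻¹) y :=
    ((hasDerivAt_id y).add_const 1).mul (Real.hasDerivAt_log hy.ne')
  have h2 : HasDerivAt (fun x : ℝ => 2*(x-1)) 2 y := by
    simpa using ((hasDerivAt_id y).sub_const 1).const_mul 2
  exact (h1.sub h2).congr_deriv (by rw [add_mul, mul_inv_cancel₀ hy.ne']; ring)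

lemma aux_G_nonneg {y : ℝ} (hy : 1 ≤ y) : 0 ≤ (y+1)*Real.log y - 2*(y-1) := by
  set G : ℝ → ℝ := fun x => (x+1)*Real.log x - 2*(x-1) with hG
  have h1 : G 1 = 0 := by simp [hG]
  have hmono : MonotoneOn G (Set.Icc 1 y) := by
    apply monotoneOn_of_deriv_nonneg (convex_Icc 1 y)
    · intro z hz
      have hz0 : (0:ℝ) < z := lt_of_lt_of_le one_pos hz.1
      exact ((aux_G_hasDeriv hz0).differentiableAt.continuousAt).continuousWithinAt
    · intro z hz
      rw [interior_Icc] at hz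
      have hz0 : (0:ℝ) < z := lt_trans one_pos hz.1
      exact (aux_G_hasDeriv hz0).differentiableAt.differentiableWithinAt
    · intro z hz
      rw [interior_Icc] at hz
      have hz0 : (0:ℝ) < z := lt_trans one_pos hz.1
      rw [(aux_G_hasDeriv hz0).deriv]
      have := aux_one_sub_inv_le_log hz0
      linarith
  have := hmono (Set.left_mem_Icc.mpr hy) (Set.right_mem_Icc.mpr hy) hy
  rw [h1] at this
  exact this

lemma aux_G_nonpos {y : ℝ} (hy0 : 0 < y) (hy : y ≤ 1) : (y+1)*Real.log y - 2*(y-1) ≤ 0 := by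
  set G : ℝ → ℝ := fun x => (x+1)*Real.log x - 2*(x-1) with hG
  have h1 : G 1 = 0 := by simp [hG]
  have hmono : MonotoneOn G (Set.Icc y 1) := by
    apply monotoneOn_of_deriv_nonneg (convex_Icc y 1)
    · intro z hz
      have hz0 : (0:ℝ) < z := lt_of_lt_of_le hy0 hz.1
      exact ((aux_G_hasDeriv hz0).differentiableAt.continuousAt).continuousWithinAt
    · intro z hz
      rw [interior_Icc] at hz
      have hz0 : (0:ℝ) < z := lt_trans hy0 hz.1
      exact (aux_G_hasDeriv hz0).differentiableAt.differentiableWithinAt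
    · intro z hz
      rw [interior_Icc] at hz
      have hz0 : (0:ℝ) < z := lt_trans hy0 hz.1
      rw [(aux_G_hasDeriv hz0).deriv]
      have := aux_one_sub_inv_le_log hz0
      linarith
  have := hmono (Set.left_mem_Icc.mpr hy) (Set.right_mem_Icc.mpr hy) hy
  rw [h1] at this
  exact this

lemma aux_F_hasDeriv {y : ℝ} (hy : 0 < y) :
    HasDerivAt (fun x => (2*x+4)*(x*Real.log x - x + 1) - 3*(x-1)^2)
      (4*((y+1)*Real.log y - 2*(y-1))) y := by
  have hxlog : HasDerivAt (fun x : ℝ => x*Real.log x) (Real.log y + 1) y :=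
    Real.hasDerivAt_mul_log hy.ne'
  have hphi : HasDerivAt (fun x : ℝ => x*Real.log x - x + 1) (Real.log y + 1 - 1) y :=
    (hxlog.sub (hasDerivAt_id y)).add_const 1
  have hlin : HasDerivAt (fun x : ℝ => 2*x+4) 2 y := by
    simpa using ((hasDerivAt_id y).const_mul 2).add_const 4
  have hprod := hlin.mul hphi
  have hsq : HasDerivAt (fun x : ℝ => 3*(x-1)^2) (3*(2*(y-1))) y := by
    have := (((hasDerivAt_id y).sub_const 1).pow 2).const_mul 3
    simpa using this
  exact (hprod.sub hsq).congr_deriv (by ring)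

/-- Key pointwise inequality: `3(x-1)² ≤ (2x+4)(x log x - x + 1)` for `x ≥ 0`. -/
lemma aux_key {x : ℝ} (hx : 0 ≤ x) :
    3*(x-1)^2 ≤ (2*x+4)*(x*Real.log x - x + 1) := by
  set F : ℝ → ℝ := fun x => (2*x+4)*(x*Real.log x - x + 1) - 3*(x-1)^2 with hF
  suffices h : 0 ≤ F x by simp only [hF] at h; linarith
  rcases hx.eq_or_lt with h0 | h0
  · simp [hF, ← h0]; norm_num
  have hF1 : F 1 = 0 := by simp [hF]
  rcases le_total x 1 with hx1 | hx1
  · have hanti : AntitoneOn F (Set.Icc x 1) := by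
      apply antitoneOn_of_deriv_nonpos (convex_Icc x 1)
      · intro z hz
        have hz0 : (0:ℝ) < z := lt_of_lt_of_le h0 hz.1
        exact ((aux_F_hasDeriv hz0).differentiableAt.continuousAt).continuousWithinAt
      · intro z hz
        rw [interior_Icc] at hz
        have hz0 : (0:ℝ) < z := lt_trans h0 hz.1
        exact (aux_F_hasDeriv hz0).differentiableAt.differentiableWithinAt
      · intro z hz
        rw [interior_Icc] at hz
        have hz0 : (0:ℝ) < z := lt_trans h0 hz.1
        rw [(aux_F_hasDeriv hz0).deriv]
        have := aux_G_nonpos hz0 hz.2.le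
        linarith
    have := hanti (Set.left_mem_Icc.mpr hx1) (Set.right_mem_Icc.mpr hx1) hx1
    rw [hF1] at this
    exact this
  · have hmono : MonotoneOn F (Set.Icc 1 x) := by
      apply monotoneOn_of_deriv_nonneg (convex_Icc 1 x)
      · intro z hz
        have hz0 : (0:ℝ) < z := lt_of_lt_of_le one_pos hz.1
        exact ((aux_F_hasDeriv hz0).differentiableAt.continuousAt).continuousWithinAt
      · intro z hz
        rw [interior_Icc] at hz
        have hz0 : (0:ℝ) < z := lt_trans one_pos hz.1
        exact (aux_F_hasDeriv hz0).differentiableAt.differentiableWithinAt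
      · intro z hz
        rw [interior_Icc] at hz
        have hz0 : (0:ℝ) < z := lt_trans one_pos hz.1
        rw [(aux_F_hasDeriv hz0).deriv]
        have := aux_G_nonneg hz.1.le
        linarith
    have := hmono (Set.left_mem_Icc.mpr hx1) (Set.right_mem_Icc.mpr hx1) hx1
    rw [hF1] at this
    exact this

/-- Csiszár–Kullback–Pinsker: for probability measures,
`2 ‖μ - ν‖_TV² ≤ H(μ|ν)`. -/
theorem stmt3 {Ω : Type*} [MeasurableSpace Ω] (μ ν : Measure Ω)
    [IsProbabilityMeasure μ] [IsProbabilityMeasure ν] :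
    ((2 * tvDist μ ν ^ 2 : ℝ) : EReal) ≤ relEnt μ ν := by
  rw [relEnt]
  by_cases h : μ ≪ ν ∧ Integrable (llr μ ν) μ
  swap
  · rw [if_neg h]; exact le_top
  rw [if_pos h]
  obtain ⟨hμν, hint⟩ := h
  rw [EReal.coe_le_coe_iff]
  set g : Ω → ℝ := fun x => (μ.rnDeriv ν x).toReal with hgdef
  have hg_meas : Measurable g := (Measure.measurable_rnDeriv μ ν).ennreal_toReal
  have hg_nonneg : ∀ x, 0 ≤ g x := fun x => ENNReal.toReal_nonneg
  have hg_int : Integrable g ν := Measure.integrable_toReal_rnDeriv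
  have hg_one : ∫ x, g x ∂ν = 1 := by
    rw [hgdef, Measure.integral_toReal_rnDeriv hμν]; simp
  set H : ℝ := ∫ x, llr μ ν x ∂μ with hHdef
  have hglogg_int : Integrable (fun x => g x * Real.log (g x)) ν := by
    have := (integrable_rnDeriv_smul_iff (f := llr μ ν) hμν).mpr hint
    simpa [llr, smul_eq_mul, hgdef] using this
  have hH_eq : H = ∫ x, g x * Real.log (g x) ∂ν := by
    rw [hHdef, ← integral_rnDeriv_smul (f := llr μ ν) hμν]
    simp [llr, smul_eq_mul, hgdef]
  set φ : Ω → ℝ := fun x => g x * Real.log (g x) - g x + 1 with hφdef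
  have hsub_int : Integrable (fun x => g x * Real.log (g x) - g x) ν := hglogg_int.sub hg_int
  have hφ_int : Integrable φ ν := hsub_int.add (integrable_const 1)
  have hφ_eq : ∫ x, φ x ∂ν = H := by
    rw [hφdef]
    rw [integral_add hsub_int (integrable_const 1),
        integral_sub hglogg_int hg_int, hg_one, integral_const]
    simp [hH_eq]
  set v2 : Ω → ℝ := fun x => 3*(g x - 1)^2 / (2*g x + 4) with hv2def
  have hden : ∀ x, (0:ℝ) < 2 * g x + 4 := fun x => by have := hg_nonneg x; linarith
  have hv2_nonneg : ∀ x, 0 ≤ v2 x := fun x =>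
    div_nonneg (by positivity) (hden x).le
  have hv2_le : ∀ x, v2 x ≤ φ x := fun x => by
    rw [hv2def]
    rw [div_le_iff₀ (hden x)]
    have := aux_key (hg_nonneg x)
    calc 3*(g x - 1)^2 ≤ (2*(g x)+4)*((g x)*Real.log (g x) - (g x) + 1) := this
      _ = φ x * (2 * g x + 4) := by rw [hφdef]; ring
  have hv2_meas' : Measurable v2 :=
    (((hg_meas.sub measurable_const).pow_const 2).const_mul 3).div
      ((hg_meas.const_mul 2).add_const 4)
  have hv2_meas : AEStronglyMeasurable v2 ν := hv2_meas'.aestronglyMeasurable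
  have hv2_int : Integrable v2 ν := by
    refine hφ_int.mono' hv2_meas (ae_of_all _ fun x => ?_)
    rw [Real.norm_of_nonneg (hv2_nonneg x)]
    exact hv2_le x
  have hv2_int_le : ∫ x, v2 x ∂ν ≤ H := by
    rw [← hφ_eq]; exact integral_mono hv2_int hφ_int hv2_le
  have hv2_integral_nonneg : 0 ≤ ∫ x, v2 x ∂ν := integral_nonneg hv2_nonneg
  set u2 : Ω → ℝ := fun x => (2*g x + 4)/3 with hu2def
  have h2g_int : Integrable (fun x => 2 * g x) ν := hg_int.const_mul 2
  have hu2_int : Integrable u2 ν := (h2g_int.add (integrable_const 4)).div_const 3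
  have hu2_nonneg : ∀ x, 0 ≤ u2 x := fun x => div_nonneg (hden x).le (by norm_num)
  have hu2_eq : ∫ x, u2 x ∂ν = 2 := by
    rw [hu2def]
    rw [integral_div, integral_add h2g_int (integrable_const 4),
        integral_const_mul, hg_one, integral_const]
    simp
    norm_num
  -- Cauchy-Schwarz
  set S : ℝ := ∫ x, |g x - 1| ∂ν with hSdef
  have habs_int : Integrable (fun x => |g x - 1|) ν := (hg_int.sub (integrable_const 1)).abs
  have hS_nonneg : 0 ≤ S := integral_nonneg fun x => abs_nonneg _
  have hu2_meas : Measurable u2 := (hg_meas.const_mul 2).add_const 4 |>.div_const 3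
  have hCS : S^2 ≤ 2 * H := by
    have hmul : ∀ x, Real.sqrt (u2 x) * Real.sqrt (v2 x) = |g x - 1| := by
      intro x
      rw [← Real.sqrt_mul (hu2_nonneg x)]
      have h : u2 x * v2 x = (g x - 1)^2 := by
        rw [hu2def, hv2def]
        have hne := (hden x).ne'
        field_simp
      rw [h, Real.sqrt_sq_eq_abs]
    have h2n : ((2:ℝ)) = ((2:ℕ):ℝ) := by norm_num
    have hu_sq : ∀ x, Real.sqrt (u2 x) ^ (2:ℝ) = u2 x := fun x => by
      rw [h2n, Real.rpow_natCast, Real.sq_sqrt (hu2_nonneg x)]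
    have hv_sq : ∀ x, Real.sqrt (v2 x) ^ (2:ℝ) = v2 x := fun x => by
      rw [h2n, Real.rpow_natCast, Real.sq_sqrt (hv2_nonneg x)]
    have hofReal : (ENNReal.ofReal 2) = 2 := by norm_num
    have hu_mem : MemLp (fun x => Real.sqrt (u2 x)) (ENNReal.ofReal 2) ν := by
      rw [hofReal]
      refine (memLp_two_iff_integrable_sq
        (Real.continuous_sqrt.measurable.comp hu2_meas).aestronglyMeasurable).mpr ?_
      refine hu2_int.congr (ae_of_all _ fun x => ?_)
      simp only [Function.comp_apply]
      exact (Real.sq_sqrt (hu2_nonneg x)).symm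
    have hv_mem : MemLp (fun x => Real.sqrt (v2 x)) (ENNReal.ofReal 2) ν := by
      rw [hofReal]
      refine (memLp_two_iff_integrable_sq
        (Real.continuous_sqrt.measurable.comp hv2_meas').aestronglyMeasurable).mpr ?_
      refine hv2_int.congr (ae_of_all _ fun x => ?_)
      simp only [Function.comp_apply]
      exact (Real.sq_sqrt (hv2_nonneg x)).symm
    have hpq : Real.HolderConjugate 2 2 := ⟨by norm_num, by norm_num, by norm_num⟩
    have hholder := integral_mul_le_Lp_mul_Lq_of_nonneg hpq
      (ae_of_all _ fun x => Real.sqrt_nonneg _) (ae_of_all _ fun x => Real.sqrt_nonneg _)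
      hu_mem hv_mem
    simp only [hu_sq, hv_sq] at hholder
    have hS_le : S ≤ 2 ^ (1/2:ℝ) * (∫ x, v2 x ∂ν) ^ (1/2:ℝ) := by
      rw [hSdef]
      calc ∫ x, |g x - 1| ∂ν = ∫ x, Real.sqrt (u2 x) * Real.sqrt (v2 x) ∂ν :=
            integral_congr_ae (ae_of_all _ fun x => (hmul x).symm)
        _ ≤ (∫ x, u2 x ∂ν) ^ (1/2:ℝ) * (∫ x, v2 x ∂ν) ^ (1/2:ℝ) := hholder
        _ = 2 ^ (1/2:ℝ) * (∫ x, v2 x ∂ν) ^ (1/2:ℝ) := by rw [hu2_eq]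
    have hrhs : (2 ^ (1/2:ℝ) * (∫ x, v2 x ∂ν) ^ (1/2:ℝ))^2 = 2 * ∫ x, v2 x ∂ν := by
      rw [← Real.sqrt_eq_rpow, ← Real.sqrt_eq_rpow, mul_pow,
        Real.sq_sqrt (by norm_num : (0:ℝ) ≤ 2), Real.sq_sqrt hv2_integral_nonneg]
    calc S^2 ≤ (2 ^ (1/2:ℝ) * (∫ x, v2 x ∂ν) ^ (1/2:ℝ))^2 :=
          pow_le_pow_left₀ hS_nonneg hS_le 2
      _ = 2 * ∫ x, v2 x ∂ν := hrhs
      _ ≤ 2 * H := by linarith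
  -- tvDist ≤ S/2
  have hgm1_int : Integrable (fun x => g x - 1) ν := hg_int.sub (integrable_const 1)
  have htotal : ∫ x, (g x - 1) ∂ν = 0 := by
    rw [integral_sub hg_int (integrable_const 1), hg_one, integral_const]
    simp
  have htv_le : tvDist μ ν ≤ S/2 := by
    rw [tvDist]
    apply ciSup_le
    rintro ⟨A, hA⟩
    have hμA : (μ A).toReal = ∫ x in A, g x ∂ν :=
      (Measure.setIntegral_toReal_rnDeriv hμν A).symm
    have hνA : (ν A).toReal = ∫ x in A, (1:ℝ) ∂ν := by
      rw [setIntegral_const]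
      simp [Measure.real]
    have hdiff : (μ A).toReal - (ν A).toReal = ∫ x in A, (g x - 1) ∂ν := by
      rw [hμA, hνA, ← integral_sub hg_int.integrableOn (integrableOn_const (measure_lt_top _ _).ne)]
    have hsplit : (∫ x in A, (g x - 1) ∂ν) + (∫ x in Aᶜ, (g x - 1) ∂ν) = 0 := by
      rw [integral_add_compl hA hgm1_int, htotal]
    have hb1 : |∫ x in A, (g x - 1) ∂ν| ≤ ∫ x in A, |g x - 1| ∂ν := by
      simpa [Real.norm_eq_abs] using
        norm_integral_le_integral_norm (μ := ν.restrict A) (f := fun x => g x - 1)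
    have hb2 : |∫ x in Aᶜ, (g x - 1) ∂ν| ≤ ∫ x in Aᶜ, |g x - 1| ∂ν := by
      simpa [Real.norm_eq_abs] using
        norm_integral_le_integral_norm (μ := ν.restrict Aᶜ) (f := fun x => g x - 1)
    have hsum : (∫ x in A, |g x - 1| ∂ν) + (∫ x in Aᶜ, |g x - 1| ∂ν) = S := by
      rw [hSdef, integral_add_compl hA habs_int]
    have heq : |∫ x in Aᶜ, (g x - 1) ∂ν| = |∫ x in A, (g x - 1) ∂ν| := by
      have : ∫ x in Aᶜ, (g x - 1) ∂ν = -(∫ x in A, (g x - 1) ∂ν) := by linarith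
      rw [this, abs_neg]
    rw [hdiff]
    rw [heq] at hb2
    linarith
  have htv_nonneg : 0 ≤ tvDist μ ν := Real.iSup_nonneg fun A => abs_nonneg _
  have h1 : tvDist μ ν ^ 2 ≤ (S/2)^2 := pow_le_pow_left₀ htv_nonneg htv_le 2
  rw [hHdef]
  nlinarith [hCS, h1]
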